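/- Bracketing theorem: let Φ be a class of Borel measurable, P-integrable real maps on ℝ. Suppose that for each ε > 0 there is a finite collection Φ_ε of pairs (ℓ, u) of Borel measurable maps ℓ, u : ℝ → ℝ such that every φ ∈ Φ satisfies ℓ ≤ φ ≤ u pointwise for at least one pair (ℓ, u) ∈ Φ_ε, and every pair in Φ_ε satisfies E^P(u − ℓ) < ε. Then Φ is a strong Glivenko–Cantelli class for P. Equivalently: if the bracketing number N_[](ε, Φ, ‖·‖_{P,1}) is finite for every ε > 0, then Φ is a strong Glivenko–Cantelli class for P. -/

import Mathlib

open MeasureTheory Filter Topology ProbabilityTheory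
open scoped ENNReal Classical

noncomputable section

/-- The positive part of an extended real number, as an element of `ℝ≥0∞`. -/
def epos (x : EReal) : ℝ≥0∞ := if x = ⊤ then ⊤ else ENNReal.ofReal x.toReal

/-- The (possibly infinite) expectation `E(g) = ∫ g⁺ − ∫ g⁻` of an extended-real map. -/
def eExp {Ω : Type*} [MeasurableSpace Ω] (μ : Measure Ω) (g : Ω → EReal) : EReal :=
  ((∫⁻ ω, epos (g ω) ∂μ : ℝ≥0∞) : EReal) - ((∫⁻ ω, epos (-(g ω)) ∂μ : ℝ≥0∞) : EReal)

/-- `E(g)` exists: at least one of `E(g⁺)`, `E(g⁻)` is finite. -/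
def eExpExists {Ω : Type*} [MeasurableSpace Ω] (μ : Measure Ω) (g : Ω → EReal) : Prop :=
  (∫⁻ ω, epos (g ω) ∂μ) ≠ ⊤ ∨ (∫⁻ ω, epos (-(g ω)) ∂μ) ≠ ⊤

/-- Outer expectation of an arbitrary extended-real map: the infimum of `E(g)` over all
measurable `g ≥ h` whose expectation exists. -/
def outerExp {Ω : Type*} [MeasurableSpace Ω] (μ : Measure Ω) (h : Ω → EReal) : EReal :=
  sInf {y : EReal | ∃ g : Ω → EReal,
    Measurable g ∧ (∀ ω, h ω ≤ g ω) ∧ eExpExists μ g ∧ eExp μ g = y}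

/-- Inner expectation of an arbitrary extended-real map. -/
def innerExp {Ω : Type*} [MeasurableSpace Ω] (μ : Measure Ω) (h : Ω → EReal) : EReal :=
  - outerExp μ (fun ω => - h ω)

/-- `g` is a minimal measurable cover of `h` w.r.t. `μ`: it is measurable, dominates `h`
pointwise, and is a.s. below any measurable map dominating `h` pointwise. -/
def IsMinMeasCover {Ω : Type*} [MeasurableSpace Ω] (μ : Measure Ω) (h g : Ω → EReal) : Prop :=
  Measurable g ∧ (∀ ω, h ω ≤ g ω) ∧
    ∀ g' : Ω → EReal, Measurable g' → (∀ ω, h ω ≤ g' ω) → ∀ᵐ ω ∂μ, g ω ≤ g' ω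

/-- Absolute value on extended reals. -/
def eabs (x : EReal) : EReal := max x (-x)

private lemma exists_isMinMeasCover {Ω : Type*} [MeasurableSpace Ω] (μ : Measure Ω) [IsFiniteMeasure μ]
    (h : Ω → EReal) : ∃ g, IsMinMeasCover μ h g := by
  set A : ℚ → Set Ω := fun q => toMeasurable μ {ω | ((q:ℝ) : EReal) < h ω} with hA
  refine ⟨fun ω => ⨆ q : ℚ, if ω ∈ A q then ((q:ℝ) : EReal) else ⊥, ?_, ?_, ?_⟩
  · exact Measurable.iSup fun q =>
      Measurable.ite (measurableSet_toMeasurable μ _) measurable_const measurable_const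
  · intro ω
    by_contra hc
    push_neg at hc
    obtain ⟨q, hq1, hq2⟩ := EReal.exists_rat_btwn_of_lt hc
    have hωA : ω ∈ A q := subset_toMeasurable μ _ hq2
    have : ((q:ℝ) : EReal) ≤ ⨆ q : ℚ, if ω ∈ A q then ((q:ℝ) : EReal) else ⊥ := by
      refine le_trans (le_of_eq ?_) (le_iSup _ q)
      simp [hωA]
    exact absurd (lt_of_le_of_lt this hq1) (lt_irrefl _)
  · intro g' hg'm hg'le
    have hnull : ∀ q : ℚ, μ (A q \ {ω | ((q:ℝ) : EReal) < g' ω}) = 0 := by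
      intro q
      have hBm : MeasurableSet {ω | ((q:ℝ) : EReal) < g' ω} := hg'm measurableSet_Ioi
      have hsub : {ω | ((q:ℝ) : EReal) < h ω} ⊆ A q ∩ {ω | ((q:ℝ) : EReal) < g' ω} :=
        fun ω hω => ⟨subset_toMeasurable μ _ hω, lt_of_lt_of_le hω (hg'le ω)⟩
      have h1 : μ (A q) ≤ μ (A q ∩ {ω | ((q:ℝ) : EReal) < g' ω}) := by
        rw [hA]
        rw [measure_toMeasurable]
        exact measure_mono hsub
      have h2 : A q \ {ω | ((q:ℝ) : EReal) < g' ω} = A q \ (A q ∩ {ω | ((q:ℝ) : EReal) < g' ω}) := by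
        ext ω; simp only [Set.mem_diff, Set.mem_inter_iff]; tauto
      rw [h2, measure_diff Set.inter_subset_left ((measurableSet_toMeasurable μ _).inter hBm).nullMeasurableSet (measure_ne_top μ _)]
      exact tsub_eq_zero_of_le h1
    have : ∀ᵐ ω ∂μ, ∀ q : ℚ, ω ∈ A q → ((q:ℝ) : EReal) < g' ω := by
      rw [ae_all_iff]
      intro q
      have := hnull q
      rw [← compl_mem_ae_iff] at *
      · refine mem_of_superset (compl_mem_ae_iff.2 (hnull q)) ?_
        intro ω hω hωA
        simp only [Set.mem_compl_iff, Set.mem_diff, not_and, not_not] at hω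
        exact hω hωA
    filter_upwards [this] with ω hω
    refine iSup_le fun q => ?_
    by_cases hq : ω ∈ A q
    · simpa [hq] using (hω q hq).le
    · simp [hq]

lemma slln_aux (P : Measure ℝ) [IsProbabilityMeasure P]
    (μ : Measure (ℕ → ℝ)) [IsProbabilityMeasure μ]
    (hmap : ∀ k : ℕ, μ.map (fun ω => ω k) = P)
    (hind : iIndepFun (m := fun _ : ℕ => (inferInstance : MeasurableSpace ℝ)) (fun k (ω : ℕ → ℝ) => ω k) μ)
    (u : ℝ → ℝ) (hum : Measurable u) (hui : Integrable u P) :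
    ∀ᵐ ω ∂μ, Tendsto (fun n : ℕ => (n:ℝ)⁻¹ * ∑ k ∈ Finset.range n, u (ω k)) atTop (𝓝 (∫ x, u x ∂P)) := by
  set X : ℕ → (ℕ → ℝ) → ℝ := fun k ω => u (ω k) with hX
  have hmeas : ∀ k, Measurable (fun ω : ℕ → ℝ => ω k) := fun k => measurable_pi_apply k
  have hint : Integrable (X 0) μ := by
    have : Integrable u (μ.map (fun ω => ω 0)) := by rw [hmap 0]; exact hui
    exact (integrable_map_measure hum.aestronglyMeasurable (hmeas 0).aemeasurable).1 this
  have hindep : Pairwise (Function.onFun (IndepFun · · μ) X) := fun i j hij =>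
    (hind.comp (fun _ => u) (fun _ => hum)).indepFun hij
  have hident : ∀ i, IdentDistrib (X i) (X 0) μ μ := fun i =>
    ⟨(hum.comp (hmeas i)).aemeasurable, (hum.comp (hmeas 0)).aemeasurable, by
      show μ.map (u ∘ fun ω => ω i) = μ.map (u ∘ fun ω => ω 0)
      rw [← Measure.map_map hum (hmeas i), ← Measure.map_map hum (hmeas 0), hmap, hmap]⟩
  have h := strong_law_ae X hint hindep hident
  have hE : μ[X 0] = ∫ x, u x ∂P := by
    rw [hX]
    show ∫ ω, u (ω 0) ∂μ = _
    rw [← hmap 0, integral_map (hmeas 0).aemeasurable hum.aestronglyMeasurable]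
  filter_upwards [h] with ω hω
  simpa [hE, smul_eq_mul] using hω

lemma integrable_of_bracket (P : Measure ℝ) [IsProbabilityMeasure P]
    (φ ℓ u : ℝ → ℝ) (hφm : Measurable φ) (hℓm : Measurable ℓ) (hum : Measurable u)
    (hφ : Integrable φ P) (hd : Integrable (fun x => u x - ℓ x) P)
    (hlow : ∀ x, ℓ x ≤ φ x) (hup : ∀ x, φ x ≤ u x) :
    Integrable ℓ P ∧ Integrable u P := by
  have huφ : Integrable (fun x => u x - φ x) P := by
    refine hd.mono ((hum.sub hφm).aestronglyMeasurable) (Eventually.of_forall fun x => ?_)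
    rw [Real.norm_eq_abs, Real.norm_eq_abs, abs_of_nonneg (by linarith [hup x]),
      abs_of_nonneg (by linarith [hlow x, hup x])]
    linarith [hlow x]
  have hu : Integrable u P := by
    refine (hφ.add huφ).congr (Eventually.of_forall fun x => ?_)
    simp
  have hl : Integrable ℓ P := by
    refine (hu.sub hd).congr (Eventually.of_forall fun x => ?_)
    simp
  exact ⟨hl, hu⟩

lemma bracket_bound (P : Measure ℝ) [IsProbabilityMeasure P] (n : ℕ) (ω : ℕ → ℝ)
    (φ ℓ u : ℝ → ℝ) (hφ : Integrable φ P) (hℓ : Integrable ℓ P) (hu : Integrable u P)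
    (hlow : ∀ x, ℓ x ≤ φ x) (hup : ∀ x, φ x ≤ u x) (ε : ℝ)
    (hε : ∫ x, (u x - ℓ x) ∂P < ε) :
    |(n:ℝ)⁻¹ * ∑ k ∈ Finset.range n, φ (ω k) - ∫ x, φ x ∂P| ≤
      max |(n:ℝ)⁻¹ * ∑ k ∈ Finset.range n, u (ω k) - ∫ x, u x ∂P|
          |(n:ℝ)⁻¹ * ∑ k ∈ Finset.range n, ℓ (ω k) - ∫ x, ℓ x ∂P| + ε := by
  have hn : (0:ℝ) ≤ (n:ℝ)⁻¹ := inv_nonneg.2 (Nat.cast_nonneg n)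
  have hSu : (n:ℝ)⁻¹ * ∑ k ∈ Finset.range n, φ (ω k) ≤ (n:ℝ)⁻¹ * ∑ k ∈ Finset.range n, u (ω k) :=
    mul_le_mul_of_nonneg_left (Finset.sum_le_sum fun k _ => hup (ω k)) hn
  have hSl : (n:ℝ)⁻¹ * ∑ k ∈ Finset.range n, ℓ (ω k) ≤ (n:ℝ)⁻¹ * ∑ k ∈ Finset.range n, φ (ω k) :=
    mul_le_mul_of_nonneg_left (Finset.sum_le_sum fun k _ => hlow (ω k)) hn
  have hIl : ∫ x, ℓ x ∂P ≤ ∫ x, φ x ∂P := integral_mono hℓ hφ hlow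
  have hIu : ∫ x, φ x ∂P ≤ ∫ x, u x ∂P := integral_mono hφ hu hup
  have hdiff : ∫ x, u x ∂P - ∫ x, ℓ x ∂P < ε := by
    rw [← integral_sub hu hℓ]; exact hε
  have h1 : (n:ℝ)⁻¹ * ∑ k ∈ Finset.range n, u (ω k) - ∫ x, u x ∂P ≤
      max |(n:ℝ)⁻¹ * ∑ k ∈ Finset.range n, u (ω k) - ∫ x, u x ∂P|
          |(n:ℝ)⁻¹ * ∑ k ∈ Finset.range n, ℓ (ω k) - ∫ x, ℓ x ∂P| :=
    le_trans (le_abs_self _) (le_max_left _ _)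
  have h2 : ∫ x, ℓ x ∂P - (n:ℝ)⁻¹ * ∑ k ∈ Finset.range n, ℓ (ω k) ≤
      max |(n:ℝ)⁻¹ * ∑ k ∈ Finset.range n, u (ω k) - ∫ x, u x ∂P|
          |(n:ℝ)⁻¹ * ∑ k ∈ Finset.range n, ℓ (ω k) - ∫ x, ℓ x ∂P| :=
    le_trans (le_abs_self _) (le_trans (abs_sub_comm _ _).le (le_max_right _ _))
  exact abs_le.mpr ⟨by linarith, by linarith⟩

/-- **Bracketing.** Let `Φ` be a class of Borel measurable, `P`-integrable real
maps on `ℝ`. If for every `ε > 0` there is a finite collection of measurable brackets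
`(ℓ, u)` with `E^P(u − ℓ) < ε` covering `Φ` (every `φ ∈ Φ` satisfies `ℓ ≤ φ ≤ u` for some
bracket), then `Φ` is a strong Glivenko–Cantelli class for `P`: the minimal measurable covers
of the uniform deviations `sup_{φ∈Φ} |Ê_n^P(φ) − E^P(φ)|` converge to `0` `P^∞`-a.s. -/
theorem bracketing_glivenko_cantelli
    (P : Measure ℝ) [IsProbabilityMeasure P]
    (Φ : Set (ℝ → ℝ)) (hΦne : Φ.Nonempty)
    (hΦm : ∀ φ ∈ Φ, Measurable φ) (hΦi : ∀ φ ∈ Φ, Integrable φ P)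
    (hbr : ∀ ε : ℝ, 0 < ε → ∃ B : Finset ((ℝ → ℝ) × (ℝ → ℝ)),
      (∀ b ∈ B, Measurable b.1 ∧ Measurable b.2 ∧
        Integrable (fun x => b.2 x - b.1 x) P ∧ ∫ x, (b.2 x - b.1 x) ∂P < ε) ∧
      ∀ φ ∈ Φ, ∃ b ∈ B, ∀ x, b.1 x ≤ φ x ∧ φ x ≤ b.2 x)
    (μ : Measure (ℕ → ℝ)) [IsProbabilityMeasure μ]
    (hmap : ∀ k : ℕ, μ.map (fun ω => ω k) = P)
    (hind : iIndepFun (m := fun _ : ℕ => (inferInstance : MeasurableSpace ℝ))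
      (fun k (ω : ℕ → ℝ) => ω k) μ) :
    ∃ G : ℕ → (ℕ → ℝ) → EReal,
      (∀ n : ℕ, IsMinMeasCover μ
        (fun ω => ⨆ φ : Φ, ((|(n : ℝ)⁻¹ * ∑ k ∈ Finset.range n, φ.1 (ω k) -
          ∫ x, φ.1 x ∂P| : ℝ) : EReal)) (G n)) ∧
      ∀ᵐ ω ∂μ, Tendsto (fun n : ℕ => G n ω) atTop (𝓝 (0 : EReal)) := by
  set H : ℕ → (ℕ → ℝ) → EReal := fun n ω => ⨆ φ : Φ,
    ((|(n : ℝ)⁻¹ * ∑ k ∈ Finset.range n, φ.1 (ω k) - ∫ x, φ.1 x ∂P| : ℝ) : EReal) with hHdef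
  choose G hG using fun n => exists_isMinMeasCover μ (H n)
  refine ⟨G, fun n => hG n, ?_⟩
  have hεpos : ∀ m : ℕ, (0:ℝ) < 1/(m+1) := fun m => by positivity
  choose B hB1 hB2 using fun m : ℕ => hbr (1/(m+1)) (hεpos m)
  set B' : ℕ → Finset ((ℝ→ℝ)×(ℝ→ℝ)) := fun m =>
    (B m).filter (fun b => ∃ φ ∈ Φ, ∀ x, b.1 x ≤ φ x ∧ φ x ≤ b.2 x) with hB'def
  have hB'mem : ∀ m b, b ∈ B' m ↔ b ∈ B m ∧ ∃ φ ∈ Φ, ∀ x, b.1 x ≤ φ x ∧ φ x ≤ b.2 x :=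
    fun m b => Finset.mem_filter
  have hB'ne : ∀ m, (B' m).Nonempty := by
    intro m
    obtain ⟨φ, hφ⟩ := hΦne
    obtain ⟨b, hb, hbr'⟩ := hB2 m φ hφ
    exact ⟨b, (hB'mem m b).2 ⟨hb, φ, hφ, hbr'⟩⟩
  have hint : ∀ m, ∀ b ∈ B' m, Integrable b.1 P ∧ Integrable b.2 P := by
    intro m b hb
    obtain ⟨hbB, φ, hφ, hbrk⟩ := (hB'mem m b).1 hb
    obtain ⟨h1m, h2m, hdi, _⟩ := hB1 m b hbB
    exact integrable_of_bracket P φ b.1 b.2 (hΦm φ hφ) h1m h2m (hΦi φ hφ) hdi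
      (fun x => (hbrk x).1) (fun x => (hbrk x).2)
  set F : ℕ → (ℕ → ℝ) → ((ℝ→ℝ)×(ℝ→ℝ)) → ℝ := fun n ω b =>
      max |(n:ℝ)⁻¹ * ∑ k ∈ Finset.range n, b.2 (ω k) - ∫ x, b.2 x ∂P|
          |(n:ℝ)⁻¹ * ∑ k ∈ Finset.range n, b.1 (ω k) - ∫ x, b.1 x ∂P| with hFdef
  set D : ℕ → ℕ → (ℕ → ℝ) → ℝ := fun n m ω =>
      (B' m).sup' (hB'ne m) (F n ω) + 1/(m+1) with hDdef
  have hFnonneg : ∀ n ω b, 0 ≤ F n ω b :=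
    fun n ω b => le_max_of_le_left (abs_nonneg _)
  have hDm : ∀ n m, Measurable fun ω : ℕ → ℝ => ((D n m ω : ℝ) : EReal) := by
    intro n m
    refine measurable_coe_real_ereal.comp ?_
    have hf : ∀ b ∈ B' m, Measurable (fun ω : ℕ → ℝ => F n ω b) := by
      intro b hb
      refine Measurable.max ?_ ?_
      · refine Measurable.abs (Measurable.sub_const (Measurable.const_mul ?_ _) _)
        exact Finset.measurable_sum _ fun k _ =>
          ((hB1 m b ((hB'mem m b).1 hb).1).2.1).comp (measurable_pi_apply k)
      · refine Measurable.abs (Measurable.sub_const (Measurable.const_mul ?_ _) _)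
        exact Finset.measurable_sum _ fun k _ =>
          ((hB1 m b ((hB'mem m b).1 hb).1).1).comp (measurable_pi_apply k)
    have h := Finset.measurable_sup' (hB'ne m) (f := fun b (ω : ℕ → ℝ) => F n ω b) hf
    have heq : ((B' m).sup' (hB'ne m) fun b (ω : ℕ → ℝ) => F n ω b)
        = fun ω : ℕ → ℝ => (B' m).sup' (hB'ne m) (F n ω) := by
      funext ω
      exact Finset.sup'_apply (hB'ne m) _ ω
    rw [heq] at h
    exact h.add_const _
  have hHD : ∀ n m ω, H n ω ≤ ((D n m ω : ℝ) : EReal) := by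
    intro n m ω
    refine iSup_le fun φ => ?_
    rw [EReal.coe_le_coe_iff]
    obtain ⟨b, hbB, hbrk⟩ := hB2 m φ.1 φ.2
    have hb' : b ∈ B' m := (hB'mem m b).2 ⟨hbB, φ.1, φ.2, hbrk⟩
    obtain ⟨hil, hiu⟩ := hint m b hb'
    have hbd := bracket_bound P n ω φ.1 b.1 b.2 (hΦi φ.1 φ.2) hil hiu
      (fun x => (hbrk x).1) (fun x => (hbrk x).2) (1/(m+1)) (hB1 m b hbB).2.2.2
    refine le_trans hbd ?_
    exact add_le_add_left (Finset.le_sup' (F n ω) hb') _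
  have hGD : ∀ᵐ ω ∂μ, ∀ n m, G n ω ≤ ((D n m ω : ℝ) : EReal) := by
    rw [ae_all_iff]
    intro n
    rw [ae_all_iff]
    intro m
    exact (hG n).2.2 _ (hDm n m) (fun ω => hHD n m ω)
  have hDlim : ∀ m, ∀ᵐ ω ∂μ, Tendsto (fun n => D n m ω) atTop (𝓝 (1/(m+1))) := by
    intro m
    have hslln : ∀ᵐ ω ∂μ, ∀ b ∈ ((B' m : Finset ((ℝ→ℝ)×(ℝ→ℝ))) : Set ((ℝ→ℝ)×(ℝ→ℝ))),
        Tendsto (fun n : ℕ => (n:ℝ)⁻¹ * ∑ k ∈ Finset.range n, b.2 (ω k)) atTop (𝓝 (∫ x, b.2 x ∂P)) ∧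
        Tendsto (fun n : ℕ => (n:ℝ)⁻¹ * ∑ k ∈ Finset.range n, b.1 (ω k)) atTop (𝓝 (∫ x, b.1 x ∂P)) := by
      rw [ae_ball_iff (B' m).countable_toSet]
      intro b hb'
      have hb : b ∈ B' m := hb'
      have h2m := (hB1 m b ((hB'mem m b).1 hb).1).2.1
      have h1m := (hB1 m b ((hB'mem m b).1 hb).1).1
      obtain ⟨hil, hiu⟩ := hint m b hb
      exact (slln_aux P μ hmap hind b.2 h2m hiu).and (slln_aux P μ hmap hind b.1 h1m hil)
    filter_upwards [hslln] with ω hω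
    have hterm : ∀ b ∈ B' m, Tendsto (fun n : ℕ => F n ω b) atTop (𝓝 0) := by
      intro b hb
      have h2 := ((hω b (Finset.mem_coe.2 hb)).1.sub_const (∫ x, b.2 x ∂P)).abs
      have h1 := ((hω b (Finset.mem_coe.2 hb)).2.sub_const (∫ x, b.1 x ∂P)).abs
      simp only [sub_self, abs_zero] at h1 h2
      simpa using h2.max h1
    have hsup0 : Tendsto (fun n : ℕ => (B' m).sup' (hB'ne m) (F n ω)) atTop (𝓝 0) := by
      have hsum : Tendsto (fun n : ℕ => ∑ b ∈ B' m, F n ω b) atTop (𝓝 0) := by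
        have := tendsto_finset_sum (B' m) (fun b hb => hterm b hb)
        simpa using this
      refine squeeze_zero (fun n => ?_) (fun n => ?_) hsum
      · obtain ⟨b0, hb0⟩ := hB'ne m
        exact le_trans (hFnonneg n ω b0) (Finset.le_sup' (F n ω) hb0)
      · exact Finset.sup'_le _ _ fun b hb =>
          Finset.single_le_sum (f := F n ω) (fun b _ => hFnonneg n ω b) hb
    have := hsup0.add_const (1/(m+1:ℝ))
    rw [zero_add] at this
    exact this
  have hDlim' : ∀ᵐ ω ∂μ, ∀ m, Tendsto (fun n => D n m ω) atTop (𝓝 (1/(m+1))) :=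
    ae_all_iff.2 hDlim
  have hG0 : ∀ n ω, (0:EReal) ≤ G n ω := by
    intro n ω
    refine le_trans ?_ ((hG n).2.1 ω)
    obtain ⟨φ, hφ⟩ := hΦne
    refine le_trans (EReal.coe_nonneg.2 (abs_nonneg
      ((n : ℝ)⁻¹ * ∑ k ∈ Finset.range n, φ (ω k) - ∫ x, φ x ∂P))) ?_
    exact le_iSup (fun ψ : Φ => ((|(n : ℝ)⁻¹ * ∑ k ∈ Finset.range n, ψ.1 (ω k) -
      ∫ x, ψ.1 x ∂P| : ℝ) : EReal)) (⟨φ, hφ⟩ : Φ)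
  filter_upwards [hGD, hDlim'] with ω h1 h2
  refine tendsto_of_le_liminf_of_limsup_le ?_ ?_
  · exact le_liminf_of_le (by isBoundedDefault) (Eventually.of_forall fun n => hG0 n ω)
  · have hm : ∀ m : ℕ, limsup (fun n => G n ω) atTop ≤ ((1/(m+1:ℝ) : ℝ) : EReal) := by
      intro m
      have hcoe : Tendsto (fun n => ((D n m ω : ℝ) : EReal)) atTop (𝓝 ((1/(m+1:ℝ) : ℝ) : EReal)) :=
        (continuous_coe_real_ereal.tendsto _).comp (h2 m)
      calc limsup (fun n => G n ω) atTop
          ≤ limsup (fun n => ((D n m ω : ℝ) : EReal)) atTop :=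
            limsup_le_limsup (Eventually.of_forall fun n => h1 n m)
        _ = _ := hcoe.limsup_eq
    have hlim0 : Tendsto (fun m : ℕ => ((1/(m+1:ℝ) : ℝ) : EReal)) atTop (𝓝 (0:EReal)) := by
      have h0 : Tendsto (fun m : ℕ => 1/((m:ℝ)+1)) atTop (𝓝 (0:ℝ)) :=
        tendsto_one_div_add_atTop_nhds_zero_nat
      have := (continuous_coe_real_ereal.tendsto (0:ℝ)).comp h0
      simpa [Function.comp_def] using this
    exact ge_of_tendsto' hlim0 hm
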